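/- Let θ*_0,...,θ*_d be pairwise distinct elements of a field K with d odd, and set m = (d-1)/2, τ*_i(λ) = ∏_{h=0}^{i-1}(λ - θ*_h) and η*_i(λ) = ∏_{h=0}^{i-1}(λ - θ*_{d-h}). Then ∏_{1 ≤ i ≤ d, i odd} (θ*_{i-1} - θ*_i)^2 · τ*_{i-1}(θ*_{i-1}) η*_{d-i}(θ*_i) / (τ*_i(θ*_i) η*_{d-i+1}(θ*_{i-1})) = (-1)^{m+1} Ψ^2, where Ψ = ∏_{0 ≤ ℓ < k ≤ m} (θ*_{2ℓ+1} - θ*_{2k})/(θ*_{2ℓ} - θ*_{2k+1}). -/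

import Mathlib

open Finset

lemma auxT {K : Type*} [Field K] (A A' B B' y : K) (hA' : A' ≠ 0) (hB' : B' ≠ 0) (hy : y ≠ 0) :
    y^2 * (A*B) / ((A' * -y) * (B' * y)) = -1 * (A/A') * (B/B') := by
  field_simp

lemma auxP {K : Type*} [Field K] (a b c e : K) (n1 : e - a ≠ 0) (n2 : e - b ≠ 0)
    (n3 : a - c ≠ 0) (n4 : a - e ≠ 0) :
    ((c - a) * (c - b)) / ((e - a) * (e - b)) * (((b - c) * (b - e)) / ((a - c) * (a - e)))
      = ((b - c) / (a - e)) ^ 2 := by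
  field_simp
  ring

lemma prodTwoMul {M : Type*} [CommMonoid M] (f : ℕ → M) (k : ℕ) :
    ∏ h ∈ range (2*k), f h = ∏ l ∈ range k, (f (2*l) * f (2*l+1)) := by
  induction k with
  | zero => simp
  | succ n ih =>
    have : 2 * (n+1) = (2*n) + 1 + 1 := by ring
    rw [this, prod_range_succ, prod_range_succ, ih, prod_range_succ, mul_assoc]

lemma prodIcoTwoMul {M : Type*} [CommMonoid M] (a b : ℕ) (f : ℕ → M) :
    ∏ j ∈ Ico (2*a) (2*b), f j = ∏ r ∈ Ico a b, (f (2*r) * f (2*r+1)) := by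
  rw [Finset.prod_Ico_eq_prod_range, Finset.prod_Ico_eq_prod_range]
  have h : 2*b - 2*a = 2*(b-a) := by omega
  rw [h, prodTwoMul]
  refine Finset.prod_congr rfl fun s hs => ?_
  have : 2*a + 2*s = 2*(a+s) ∧ 2*a + (2*s+1) = 2*(a+s)+1 := by omega
  rw [this.1, this.2]

lemma prodReflect {M : Type*} [CommMonoid M] (a b : ℕ) (f : ℕ → M) (hab : a ≤ b) :
    ∏ h ∈ range (b - a), f (b - h) = ∏ j ∈ Ico (a+1) (b+1), f j := by
  apply Finset.prod_nbij' (fun h => b - h) (fun j => b - j)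
  · intro h hh; simp only [mem_range] at hh; simp only [mem_Ico]; omega
  · intro j hj; simp only [mem_Ico] at hj; simp only [mem_range]; omega
  · intro h hh; simp only [mem_range] at hh; omega
  · intro j hj; simp only [mem_Ico] at hj; omega
  · intro h hh; rfl

lemma prodTriangle {M : Type*} [CommMonoid M] (n : ℕ) (f : ℕ → ℕ → M) :
    ∏ k ∈ range n, ∏ r ∈ Ico (k+1) n, f k r = ∏ r ∈ range n, ∏ k ∈ range r, f k r := by
  apply Finset.prod_comm'
  intro k r
  simp only [mem_range, mem_Ico]
  omega

theorem stmt14 {K : Type*} [Field K] (d : ℕ) (hodd : Odd d)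
    (θ : ℕ → K)
    (hdist : ∀ i j : ℕ, i ≤ d → j ≤ d → θ i = θ j → i = j)
    (m : ℕ) (hm : m = (d - 1) / 2)
    (τ η : ℕ → K → K)
    (hτ : ∀ i x, τ i x = ∏ h ∈ Finset.range i, (x - θ h))
    (hη : ∀ i x, η i x = ∏ h ∈ Finset.range i, (x - θ (d - h))) :
    ∏ i ∈ (Finset.range (d+1)).filter (fun i => Odd i),
        (θ (i-1) - θ i) ^ 2 * (τ (i-1) (θ (i-1)) * η (d-i) (θ i)) /
          (τ i (θ i) * η (d-i+1) (θ (i-1)))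
      = (-1 : K) ^ (m+1) *
        (∏ k ∈ Finset.range (m+1), ∏ l ∈ Finset.range k,
          (θ (2*l+1) - θ (2*k)) / (θ (2*l) - θ (2*k+1))) ^ 2 := by
  obtain ⟨c, hc⟩ := hodd
  have hd : d = 2*m + 1 := by omega
  subst hd
  clear hm hc
  have hne : ∀ a b : ℕ, a ≤ 2*m+1 → b ≤ 2*m+1 → a ≠ b → θ a - θ b ≠ 0 := by
    intro a b ha hb hab
    exact sub_ne_zero_of_ne (fun h => hab (hdist a b ha hb h))
  have hfil : (Finset.range (2*m+1+1)).filter (fun i => Odd i)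
      = (Finset.range (m+1)).image (fun k => 2*k+1) := by
    ext i
    simp only [mem_filter, mem_range, mem_image, Nat.odd_iff]
    constructor
    · rintro ⟨h1, h2⟩
      exact ⟨i/2, by omega, by omega⟩
    · rintro ⟨k, hk, rfl⟩
      exact ⟨by omega, by omega⟩
  rw [hfil, Finset.prod_image (by intro a _ b _ h; simp only at h; omega)]
  have hstep : ∀ k ∈ Finset.range (m+1),
      (θ ((2*k+1)-1) - θ (2*k+1)) ^ 2 *
        (τ ((2*k+1)-1) (θ ((2*k+1)-1)) * η (2*m+1-(2*k+1)) (θ (2*k+1))) /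
        (τ (2*k+1) (θ (2*k+1)) * η (2*m+1-(2*k+1)+1) (θ ((2*k+1)-1)))
      = (-1) *
        (∏ l ∈ range k, ((θ (2*k) - θ (2*l)) * (θ (2*k) - θ (2*l+1))) /
          ((θ (2*k+1) - θ (2*l)) * (θ (2*k+1) - θ (2*l+1)))) *
        (∏ r ∈ Ico (k+1) (m+1), ((θ (2*k+1) - θ (2*r)) * (θ (2*k+1) - θ (2*r+1))) /
          ((θ (2*k) - θ (2*r)) * (θ (2*k) - θ (2*r+1)))) := by
    intro k hk
    simp only [mem_range] at hk
    have hkm : k ≤ m := by omega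
    have e1 : (2*k+1) - 1 = 2*k := by omega
    rw [e1]
    have hτ1 : τ (2*k) (θ (2*k)) =
        ∏ l ∈ range k, ((θ (2*k) - θ (2*l)) * (θ (2*k) - θ (2*l+1))) := by
      rw [hτ]; exact prodTwoMul (fun h => θ (2*k) - θ h) k
    have hτ2 : τ (2*k+1) (θ (2*k+1)) =
        (∏ l ∈ range k, ((θ (2*k+1) - θ (2*l)) * (θ (2*k+1) - θ (2*l+1)))) *
          (θ (2*k+1) - θ (2*k)) := by
      rw [hτ, prod_range_succ, prodTwoMul (fun h => θ (2*k+1) - θ h) k]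
    have hrefl : ∀ x : K, ∏ h ∈ range (2*m+1-(2*k+1)), (x - θ (2*m+1 - h)) =
        ∏ r ∈ Ico (k+1) (m+1), ((x - θ (2*r)) * (x - θ (2*r+1))) := by
      intro x
      rw [prodReflect (2*k+1) (2*m+1) (fun j => x - θ j) (by omega)]
      have e3 : (2*k+1)+1 = 2*(k+1) := by ring
      have e4 : (2*m+1)+1 = 2*(m+1) := by ring
      rw [e3, e4, prodIcoTwoMul]
    have hη1 : η (2*m+1-(2*k+1)) (θ (2*k+1)) =
        ∏ r ∈ Ico (k+1) (m+1), ((θ (2*k+1) - θ (2*r)) * (θ (2*k+1) - θ (2*r+1))) := by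
      rw [hη]; exact hrefl (θ (2*k+1))
    have hη2 : η (2*m+1-(2*k+1)+1) (θ (2*k)) =
        (∏ r ∈ Ico (k+1) (m+1), ((θ (2*k) - θ (2*r)) * (θ (2*k) - θ (2*r+1)))) *
          (θ (2*k) - θ (2*k+1)) := by
      rw [hη, prod_range_succ]
      have e6 : 2*m+1 - (2*m+1-(2*k+1)) = 2*k+1 := by omega
      rw [e6, hrefl (θ (2*k))]
    rw [hτ1, hτ2, hη1, hη2, Finset.prod_div_distrib, Finset.prod_div_distrib]
    have hA : (∏ l ∈ range k, ((θ (2*k+1) - θ (2*l)) * (θ (2*k+1) - θ (2*l+1)))) ≠ 0 := by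
      refine Finset.prod_ne_zero_iff.mpr fun l hl => ?_
      simp only [mem_range] at hl
      exact mul_ne_zero (hne _ _ (by omega) (by omega) (by omega))
        (hne _ _ (by omega) (by omega) (by omega))
    have hB : (∏ r ∈ Ico (k+1) (m+1), ((θ (2*k) - θ (2*r)) * (θ (2*k) - θ (2*r+1)))) ≠ 0 := by
      refine Finset.prod_ne_zero_iff.mpr fun r hr => ?_
      simp only [mem_Ico] at hr
      exact mul_ne_zero (hne _ _ (by omega) (by omega) (by omega))
        (hne _ _ (by omega) (by omega) (by omega))
    have hy : θ (2*k) - θ (2*k+1) ≠ 0 := hne _ _ (by omega) (by omega) (by omega)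
    have hx : θ (2*k+1) - θ (2*k) = -(θ (2*k) - θ (2*k+1)) := by ring
    rw [hx]
    exact auxT _ _ _ _ _ hA hB hy
  rw [Finset.prod_congr rfl hstep, Finset.prod_mul_distrib, Finset.prod_mul_distrib,
    Finset.prod_const, Finset.card_range,
    prodTriangle (m+1) (fun k r => ((θ (2*k+1) - θ (2*r)) * (θ (2*k+1) - θ (2*r+1))) /
      ((θ (2*k) - θ (2*r)) * (θ (2*k) - θ (2*r+1)))),
    mul_assoc, ← Finset.prod_mul_distrib]
  congr 1
  rw [← Finset.prod_pow]
  refine Finset.prod_congr rfl fun k hk => ?_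
  simp only [mem_range] at hk
  rw [← Finset.prod_mul_distrib, ← Finset.prod_pow]
  refine Finset.prod_congr rfl fun l hl => ?_
  simp only [mem_range] at hl
  have n1 : θ (2*k+1) - θ (2*l) ≠ 0 := hne _ _ (by omega) (by omega) (by omega)
  have n2 : θ (2*k+1) - θ (2*l+1) ≠ 0 := hne _ _ (by omega) (by omega) (by omega)
  have n3 : θ (2*l) - θ (2*k) ≠ 0 := hne _ _ (by omega) (by omega) (by omega)
  have n4 : θ (2*l) - θ (2*k+1) ≠ 0 := hne _ _ (by omega) (by omega) (by omega)
  exact auxP _ _ _ _ n1 n2 n3 n4
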